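/- For every 1 ≤ k ≤ n there exists a constant C(n,k) > 0, depending only on n and k, such that for every λ = (λ_1,…,λ_n) ∈ Γ_k with λ_1 ≥ λ_2 ≥ ⋯ ≥ λ_n one has λ_1 σ_{k−1}(λ|1) ≥ C(n,k) σ_k(λ). -/

import Mathlib

open Finset

/-- `esymmOn S m lam` is the m-th elementary symmetric polynomial of the
components of `lam` with indices in `S` (zero for `m < 0`, and automatically
zero for `m > |S|`). For `S = {i}ᶜ` this is `σ_m(λ|i)`, etc. -/
noncomputable def esymmOn {n : ℕ} (S : Finset (Fin n)) (m : ℤ) (lam : Fin n → ℝ) : ℝ :=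
  if m < 0 then 0 else ∑ s ∈ S.powersetCard m.toNat, ∏ i ∈ s, lam i

/-- `σ_m(λ)` for the full vector. -/
noncomputable def esymm {n : ℕ} (m : ℤ) (lam : Fin n → ℝ) : ℝ :=
  esymmOn Finset.univ m lam

/-- Garding's cone `Γ_k`. -/
def GammaCone {n : ℕ} (k : ℕ) (lam : Fin n → ℝ) : Prop :=
  ∀ j : ℕ, 1 ≤ j → j ≤ k → 0 < esymm (j : ℤ) lam

namespace GardingAux
open Multiset Polynomial

lemma esymm_cons (a : ℝ) (M : Multiset ℝ) (j : ℕ) :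
    (a ::ₘ M).esymm (j+1) = a * M.esymm j + M.esymm (j+1) := by
  simp only [Multiset.esymm, powersetCard_cons, Multiset.map_add, Multiset.sum_add,
    Multiset.map_map, Function.comp, Multiset.prod_cons]
  rw [← Multiset.sum_map_mul_left]
  ring

lemma esymm_zero' (M : Multiset ℝ) : M.esymm 0 = 1 := by simp [Multiset.esymm]

lemma esymm_one' (M : Multiset ℝ) : M.esymm 1 = M.sum := by
  simp [Multiset.esymm, Multiset.powersetCard_one, Multiset.map_map, Function.comp]

lemma esymm_of_lt {M : Multiset ℝ} {j : ℕ} (h : Multiset.card M < j) : M.esymm j = 0 := by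
  simp [Multiset.esymm, Multiset.powersetCard_eq_empty _ h]

lemma esymm_card (M : Multiset ℝ) : M.esymm (Multiset.card M) = M.prod := by
  induction M using Multiset.induction_on with
  | empty => simp [Multiset.esymm]
  | cons a M ih =>
    rw [show Multiset.card (a ::ₘ M) = Multiset.card M + 1 by simp, esymm_cons, ih,
      esymm_of_lt (by simp)]
    simp

lemma sq_esymm_one (M : Multiset ℝ) :
    (M.esymm 1)^2 = (M.map (fun x => x^2)).sum + 2 * M.esymm 2 := by
  induction M using Multiset.induction_on with
  | empty => simp [esymm_one', esymm_of_lt (M := (0 : Multiset ℝ)) (j := 2) (by simp)]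
  | cons a M ih =>
    have h2 : (a ::ₘ M).esymm 2 = a * M.esymm 1 + M.esymm 2 := esymm_cons a M 1
    have h1 : (a ::ₘ M).esymm 1 = a * M.esymm 0 + M.esymm 1 := esymm_cons a M 0
    rw [h1, h2, esymm_zero']
    simp only [Multiset.map_cons, Multiset.sum_cons]
    linear_combination ih

lemma cs_multiset (M : Multiset ℝ) :
    (M.sum)^2 ≤ (Multiset.card M : ℝ) * (M.map (fun x => x^2)).sum := by
  induction M using Multiset.induction_on with
  | empty => simp
  | cons a M ih =>
    simp only [Multiset.sum_cons, Multiset.map_cons, Multiset.card_cons]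
    push_cast
    have hc : (0:ℝ) ≤ (Multiset.card M : ℝ) := Nat.cast_nonneg _
    have hS : (0:ℝ) ≤ (M.map (fun x => x^2)).sum := by
      apply Multiset.sum_nonneg
      intro x hx
      obtain ⟨y, _, rfl⟩ := Multiset.mem_map.mp hx
      positivity
    rcases eq_or_ne M 0 with rfl | hM
    · simp

    · have hc1 : (1:ℝ) ≤ (Multiset.card M : ℝ) := by
        have := Multiset.card_pos.mpr hM
        exact_mod_cast this
      nlinarith [ih, sq_nonneg ((Multiset.card M : ℝ) * a - M.sum),
        mul_nonneg hc (sub_nonneg.mpr ih), hc1, hS]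

lemma newton_base (M : Multiset ℝ) :
    ((Multiset.card M).choose 1 : ℝ)^2 * (M.esymm 0 * M.esymm 2) ≤
      (((Multiset.card M).choose 0 : ℝ) * ((Multiset.card M).choose 2 : ℝ)) * (M.esymm 1)^2 := by
  set m := Multiset.card M with hm
  rcases lt_or_ge m 2 with h | h
  · rw [esymm_of_lt (show Multiset.card M < 2 by rw [← hm]; omega), Nat.choose_eq_zero_of_lt h]
    simp
  have hch2 : ((m.choose 2 : ℕ) : ℝ) = (m:ℝ) * ((m:ℝ) - 1) / 2 := by
    rw [Nat.cast_choose_two]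
  have he2m : (m:ℝ)^2 * (2 * M.esymm 2) = (m:ℝ)^2 * ((M.esymm 1)^2 - (M.map (fun x => x^2)).sum) := by
    linear_combination (-(m:ℝ)^2) * sq_esymm_one M
  have hcs : (M.esymm 1)^2 ≤ (m:ℝ) * (M.map (fun x => x^2)).sum := by
    rw [esymm_one']
    simpa [← hm] using cs_multiset M
  have h3 : (m:ℝ) * (M.esymm 1)^2 ≤ (m:ℝ) * ((m:ℝ) * (M.map (fun x => x^2)).sum) :=
    mul_le_mul_of_nonneg_left hcs (Nat.cast_nonneg m)
  rw [esymm_zero', Nat.choose_one_right, Nat.choose_zero_right, hch2]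
  push_cast
  linarith [he2m, h3]

lemma choose_lc (m i : ℕ) : m.choose i * m.choose (i+2) ≤ (m.choose (i+1))^2 := by
  rcases lt_or_ge m (i+2) with h | h
  · rw [Nat.choose_eq_zero_of_lt h]
    simp
  have h1 : m.choose (i+1) * (i+1) = m.choose i * (m - i) := Nat.choose_succ_right_eq m i
  have h2 : m.choose (i+2) * (i+2) = m.choose (i+1) * (m - (i+1)) := Nat.choose_succ_right_eq m (i+1)
  have e1 : (m.choose i * m.choose (i+2)) * ((i+1)*(i+2)) =
      (m.choose i * m.choose (i+1)) * ((i+1)*(m-(i+1))) := by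
    rw [show (m.choose i * m.choose (i+2)) * ((i+1)*(i+2)) =
      (m.choose (i+2) * (i+2)) * (m.choose i * (i+1)) by ring, h2]
    ring
  have e2 : (m.choose (i+1))^2 * ((i+1)*(i+2)) = (m.choose i * m.choose (i+1)) * ((i+2)*(m-i)) := by
    rw [pow_two, show (m.choose (i+1) * m.choose (i+1)) * ((i+1)*(i+2)) =
      (m.choose (i+1) * (i+1)) * (m.choose (i+1) * (i+2)) by ring, h1]
    ring
  have hineq : (i+1)*(m-(i+1)) ≤ (i+2)*(m-i) := Nat.mul_le_mul (by omega) (by omega)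
  have key : (m.choose i * m.choose (i+2)) * ((i+1)*(i+2)) ≤ (m.choose (i+1))^2 * ((i+1)*(i+2)) := by
    rw [e1, e2]
    exact Nat.mul_le_mul le_rfl hineq
  exact Nat.le_of_mul_le_mul_right key (by positivity)

lemma esymm_pos (M : Multiset ℝ) (h : ∀ x ∈ M, 0 < x) (j : ℕ) (hj : j ≤ Multiset.card M) :
    0 < M.esymm j := by
  have hne : (M.powersetCard j) ≠ 0 := by
    intro h0
    have h1 := Multiset.card_powersetCard j M
    rw [h0] at h1
    simp only [Multiset.card_zero] at h1
    exact absurd h1.symm (Nat.choose_pos hj).ne'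
  obtain ⟨T, hT⟩ := Multiset.exists_mem_of_ne_zero hne
  have hTpos : 0 < T.prod :=
    Multiset.prod_pos fun y hy => h y (Multiset.mem_of_le (Multiset.mem_powersetCard.mp hT).1 hy)
  have hnn : ∀ x ∈ (M.powersetCard j).map Multiset.prod, 0 ≤ x := by
    intro x hx
    obtain ⟨S, hS, rfl⟩ := Multiset.mem_map.mp hx
    exact Multiset.prod_nonneg fun y hy => (h y (Multiset.mem_of_le (Multiset.mem_powersetCard.mp hS).1 hy)).le
  have hmem : T.prod ∈ (M.powersetCard j).map Multiset.prod := Multiset.mem_map_of_mem _ hT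
  exact lt_of_lt_of_le hTpos (Multiset.single_le_sum hnn _ hmem)

lemma exists_max (M : Multiset ℝ) (h : M ≠ 0) : ∃ b ∈ M, ∀ x ∈ M, x ≤ b := by
  induction M using Multiset.induction_on with
  | empty => exact absurd rfl h
  | cons a M ih =>
    rcases eq_or_ne M 0 with rfl | hM
    · exact ⟨a, Multiset.mem_cons_self a 0, by simp⟩
    · obtain ⟨b, hb, hble⟩ := ih hM
      rcases le_total a b with hab | hab
      · exact ⟨b, Multiset.mem_cons_of_mem hb, fun x hx => by
          rcases Multiset.mem_cons.mp hx with rfl | hx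
          · exact hab
          · exact hble x hx⟩
      · exact ⟨a, Multiset.mem_cons_self a M, fun x hx => by
          rcases Multiset.mem_cons.mp hx with rfl | hx
          · exact le_rfl
          · exact (hble x hx).trans hab⟩

lemma esymm_inv (M : Multiset ℝ) (h0 : ∀ x ∈ M, x ≠ 0) :
    ∀ j ≤ Multiset.card M, (M.map (fun x => x⁻¹)).esymm j * M.prod
      = M.esymm (Multiset.card M - j) := by
  induction M using Multiset.induction_on with
  | empty =>
    intro j hj
    simp only [Multiset.card_zero, Nat.le_zero] at hj
    subst hj
    simp [esymm_zero']
  | cons a M ih =>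
    intro j hj
    have ha : a ≠ 0 := h0 a (Multiset.mem_cons_self a M)
    have h0' : ∀ x ∈ M, x ≠ 0 := fun x hx => h0 x (Multiset.mem_cons_of_mem hx)
    rcases Nat.eq_zero_or_pos j with rfl | hjpos
    · rw [esymm_zero', one_mul, Nat.sub_zero, esymm_card]
    obtain ⟨j, rfl⟩ : ∃ j', j = j'+1 := ⟨j-1, by omega⟩
    have hmap : (a ::ₘ M).map (fun x => x⁻¹) = a⁻¹ ::ₘ M.map (fun x => x⁻¹) := by
      simp
    rw [hmap, esymm_cons, Multiset.prod_cons]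
    have hcard : Multiset.card (a ::ₘ M) = Multiset.card M + 1 := by simp
    rcases lt_or_ge (Multiset.card M) (j+1) with hlt | hle
    · -- j + 1 = card M + 1, i.e. j = card M
      have hj' : j = Multiset.card M := by rw [hcard] at hj; omega
      rw [esymm_of_lt (M := M.map (fun x => x⁻¹)) (j := j+1)
        (by rw [Multiset.card_map]; omega)]
      rw [hcard, hj']
      rw [show Multiset.card M + 1 - (Multiset.card M + 1) = 0 by omega, esymm_zero']
      have hE := ih h0' (Multiset.card M) le_rfl
      rw [Nat.sub_self, esymm_zero'] at hE
      rw [add_zero, show (a⁻¹ * (M.map (fun x => x⁻¹)).esymm (Multiset.card M)) * (a * M.prod)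
        = (a * a⁻¹) * ((M.map (fun x => x⁻¹)).esymm (Multiset.card M) * M.prod) by ring, hE,
        mul_one, mul_inv_cancel₀ ha]
    · have ih1 := ih h0' j (by omega)
      have ih2 := ih h0' (j+1) hle
      have hsub : Multiset.card (a ::ₘ M) - (j+1) = (Multiset.card M - (j+1)) + 1 := by
        rw [hcard]; omega
      rw [hsub, esymm_cons]
      rw [show Multiset.card M - (j + 1) + 1 = Multiset.card M - j by omega] at *
      calc (a⁻¹ * (M.map (fun x => x⁻¹)).esymm j + (M.map (fun x => x⁻¹)).esymm (j+1)) * (a * M.prod)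
          = (M.map (fun x => x⁻¹)).esymm j * M.prod
            + a * ((M.map (fun x => x⁻¹)).esymm (j+1) * M.prod) := by
            field_simp
        _ = a * M.esymm (Multiset.card M - (j+1)) + M.esymm (Multiset.card M - j) := by
            rw [ih1, ih2]; ring

lemma exists_deriv (M : Multiset ℝ) (hM : M ≠ 0) :
    ∃ M' : Multiset ℝ, Multiset.card M' = Multiset.card M - 1 ∧
      ∀ i ≤ Multiset.card M - 1,
        (Multiset.card M : ℝ) * M'.esymm i = ((Multiset.card M - i : ℕ) : ℝ) * M.esymm i := by
  set m := Multiset.card M with hm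
  have hm1 : 1 ≤ m := by
    rw [hm, Nat.one_le_iff_ne_zero]
    simpa using hM
  set P : Polynomial ℝ := (M.map fun r => X + C r).prod with hP
  have hmonic : P.Monic := monic_multiset_prod_of_monic _ _ fun r _ => monic_X_add_C r
  have hdeg : P.natDegree = m := by
    rw [hP, natDegree_multiset_prod_of_monic _ (fun f hf => by
      obtain ⟨r, _, rfl⟩ := Multiset.mem_map.mp hf; exact monic_X_add_C r)]
    rw [Multiset.map_map]
    have : (M.map fun r => ((X + C r : Polynomial ℝ)).natDegree) = M.map (fun _ => 1) := by
      apply Multiset.map_congr rfl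
      intro x _
      exact natDegree_X_add_C x
    simp only [Function.comp]
    rw [this]
    simp [hm]
  have hroots : P.roots = M.map (fun r => -r) := by
    have h1 : P = ((M.map (fun r => -r)).map fun a => X - C a).prod := by
      rw [Multiset.map_map]
      apply congr_arg
      apply Multiset.map_congr rfl
      intro x _
      simp [sub_neg_eq_add]
    rw [h1, roots_multiset_prod_X_sub_C]
  have hnroots : Multiset.card P.roots = m := by rw [hroots]; simp [hm]
  set Q := derivative P with hQ
  have hQdeglt : Q.natDegree < m := by
    rw [← hdeg]
    exact natDegree_derivative_lt (by omega)
  have hmm : m - 1 + 1 = m := by omega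
  have hcoeffQ : Q.coeff (m-1) = (m:ℝ) := by
    rw [hQ, coeff_derivative, hmm]
    rw [show P.coeff m = 1 from hdeg ▸ hmonic.coeff_natDegree]
    have : ((m-1 : ℕ):ℝ) + 1 = (m : ℝ) := by
      rw [show ((m-1:ℕ):ℝ) + 1 = ((m-1+1 : ℕ):ℝ) by push_cast; ring, hmm]
    rw [this, one_mul]
  have hQne : Q ≠ 0 := by
    intro h0
    rw [h0] at hcoeffQ
    simp only [coeff_zero] at hcoeffQ
    exact absurd hcoeffQ.symm (Nat.cast_ne_zero.mpr (by omega))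
  have hcard_le : Multiset.card Q.roots ≤ Q.natDegree := card_roots' Q
  have hcard_ge : m ≤ Multiset.card Q.roots + 1 := by
    have := P.card_roots_le_derivative
    rwa [hnroots, ← hQ] at this
  have hQroots : Multiset.card Q.roots = m - 1 := by omega
  have hQdeg : Q.natDegree = m - 1 := by omega
  have hsplits : Q.Splits := (splits_iff_card_roots).mpr (by omega)
  have hlead : Q.leadingCoeff = (m:ℝ) := by
    rw [leadingCoeff, hQdeg, hcoeffQ]
  refine ⟨Q.roots.map (fun r => -r), by simpa using hQroots, ?_⟩
  have hQeq : Q = C (m:ℝ) * (((Q.roots.map (fun r => -r)).map fun r => X + C r)).prod := by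
    nth_rewrite 1 [hsplits.eq_prod_roots]
    rw [hlead, Multiset.map_map]
    congr 1
    apply congr_arg
    apply Multiset.map_congr rfl
    intro x _
    simp [sub_eq_add_neg]
  intro i hi
  set M' := Q.roots.map (fun r => -r) with hM'
  have hcM' : Multiset.card M' = m - 1 := by simpa [hM'] using hQroots
  have h2 : P.coeff (m-1-i+1) = M.esymm i := by
    rw [hP, Multiset.prod_X_add_C_coeff M (show m-1-i+1 ≤ Multiset.card M by omega)]
    rw [show Multiset.card M - (m-1-i+1) = i by omega]
  have h3 : Q.coeff (m-1-i) = (m:ℝ) * M'.esymm i := by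
    rw [hQeq, coeff_C_mul, Multiset.prod_X_add_C_coeff M' (by omega)]
    rw [show Multiset.card M' - (m-1-i) = i by omega]
  have h1 : Q.coeff (m-1-i) = P.coeff (m-1-i+1) * (((m-1-i:ℕ):ℝ) + 1) := by
    rw [hQ, coeff_derivative]
  rw [h3, h2] at h1
  rw [h1]
  have : ((m-1-i : ℕ):ℝ) + 1 = ((m - i : ℕ):ℝ) := by
    rw [show ((m-1-i:ℕ):ℝ) + 1 = ((m-1-i+1 : ℕ):ℝ) by push_cast; ring]
    congr 1
    omega
  rw [this]
  ring

lemma newton : ∀ m : ℕ, ∀ M : Multiset ℝ, Multiset.card M = m → ∀ i : ℕ,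
    (m.choose (i+1) : ℝ)^2 * (M.esymm i * M.esymm (i+2)) ≤
      ((m.choose i : ℝ) * (m.choose (i+2) : ℝ)) * (M.esymm (i+1))^2 := by
  intro m
  induction m using Nat.strong_induction_on with
  | _ m IH =>
    intro M hM i
    rcases lt_or_ge m (i+2) with hlt | hge
    · rw [esymm_of_lt (M := M) (j := i+2) (by omega), Nat.choose_eq_zero_of_lt hlt]
      simp
    rcases Nat.eq_zero_or_pos i with rfl | hipos
    · have := newton_base M
      rwa [hM] at this
    rcases eq_or_lt_of_le hge with heq | hmid
    · -- top case : i + 2 = m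
      by_cases hz : ∃ x ∈ M, x = 0
      · have hem : M.esymm (i+2) = 0 := by
          rw [show i+2 = m from heq.symm ▸ rfl, ← hM, esymm_card]
          obtain ⟨x, hx, rfl⟩ := hz
          exact Multiset.prod_eq_zero hx
        rw [hem, mul_zero, mul_zero]
        positivity
      · push_neg at hz
        have hprod : M.prod ≠ 0 := Multiset.prod_ne_zero (fun h => (hz 0 h) rfl)
        have hrel := esymm_inv M hz
        have r2 : (M.map (fun x => x⁻¹)).esymm 2 * M.prod = M.esymm i := by
          have := hrel 2 (by omega)
          rwa [hM, show m - 2 = i by omega] at this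
        have r1 : (M.map (fun x => x⁻¹)).esymm 1 * M.prod = M.esymm (i+1) := by
          have := hrel 1 (by omega)
          rwa [hM, show m - 1 = i+1 by omega] at this
        have r0 : (M.map (fun x => x⁻¹)).esymm 0 * M.prod = M.esymm (i+2) := by
          have := hrel 0 (by omega)
          rwa [hM, show m - 0 = i+2 by omega] at this
        have hc1 : m.choose (i+1) = m.choose 1 := by
          rw [show i+1 = m - 1 by omega]
          exact Nat.choose_symm (by omega)
        have hc2 : m.choose i = m.choose 2 := by
          rw [show i = m - 2 by omega]
          exact Nat.choose_symm (by omega)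
        have hc3 : m.choose (i+2) = m.choose 0 := by
          rw [show i+2 = m by omega, Nat.choose_self, Nat.choose_zero_right]
        have hbase := newton_base (M.map (fun x => x⁻¹))
        rw [Multiset.card_map, hM] at hbase
        have hbase' := mul_le_mul_of_nonneg_right hbase (show (0:ℝ) ≤ M.prod^2 by positivity)
        have hL : (m.choose (i+1):ℝ)^2 * (M.esymm i * M.esymm (i+2)) =
            (m.choose 1 : ℝ)^2 * ((M.map (fun x => x⁻¹)).esymm 0 * (M.map (fun x => x⁻¹)).esymm 2)
              * M.prod^2 := by
          rw [hc1, ← r2, ← r0]; ring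
        have hR : ((m.choose i:ℝ) * (m.choose (i+2):ℝ)) * (M.esymm (i+1))^2 =
            ((m.choose 0 : ℝ) * (m.choose 2 : ℝ)) * ((M.map (fun x => x⁻¹)).esymm 1)^2
              * M.prod^2 := by
          rw [hc2, hc3, ← r1]; ring
        rw [hL, hR]
        exact hbase'
    · -- middle case : i + 2 < m
      have hMne : M ≠ 0 := by
        intro h0
        rw [h0] at hM
        simp at hM
        omega
      obtain ⟨M', hcM', hrel⟩ := exists_deriv M hMne
      rw [hM] at hcM' hrel
      have IH' := IH (m-1) (by omega) M' hcM' i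
      have nidR : ∀ j : ℕ, (m:ℝ) * ((m-1).choose j : ℝ) = (m.choose j : ℝ) * ((m - j : ℕ) : ℝ) := by
        intro j
        have h1 := Nat.add_one_mul_choose_eq (m-1) j
        rw [show m - 1 + 1 = m by omega] at h1
        have h2 : m * ((m-1).choose j) = m.choose j * (m - j) := by
          rw [h1, Nat.choose_succ_right_eq]
        exact_mod_cast h2
      have rel_i := hrel i (by omega)
      have rel_i1 := hrel (i+1) (by omega)
      have rel_i2 := hrel (i+2) (by omega)
      have h4 : ((m:ℝ) * (((m-1).choose (i+1) : ℕ):ℝ))^2 *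
            (((m:ℝ) * M'.esymm i) * ((m:ℝ) * M'.esymm (i+2))) ≤
          (((m:ℝ) * (((m-1).choose i : ℕ):ℝ)) * ((m:ℝ) * (((m-1).choose (i+2) : ℕ):ℝ))) *
            ((m:ℝ) * M'.esymm (i+1))^2 := by
        calc ((m:ℝ) * (((m-1).choose (i+1) : ℕ):ℝ))^2 *
              (((m:ℝ) * M'.esymm i) * ((m:ℝ) * M'.esymm (i+2)))
            = (m:ℝ)^4 * ((((m-1).choose (i+1) : ℕ):ℝ)^2 * (M'.esymm i * M'.esymm (i+2))) := by
              ring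
          _ ≤ (m:ℝ)^4 * (((((m-1).choose i : ℕ):ℝ) * (((m-1).choose (i+2) : ℕ):ℝ)) *
              (M'.esymm (i+1))^2) := by
              apply mul_le_mul_of_nonneg_left IH' (by positivity)
          _ = (((m:ℝ) * (((m-1).choose i : ℕ):ℝ)) * ((m:ℝ) * (((m-1).choose (i+2) : ℕ):ℝ))) *
              ((m:ℝ) * M'.esymm (i+1))^2 := by
              ring
      rw [rel_i, rel_i1, rel_i2, nidR i, nidR (i+1), nidR (i+2)] at h4
      have hu : ∀ j : ℕ, j + 1 ≤ m → (0:ℝ) < ((m - j : ℕ) : ℝ) := by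
        intro j hj
        have : 0 < m - j := by omega
        exact_mod_cast this
      have hpos : (0:ℝ) < ((m - i : ℕ):ℝ) * ((m - (i+1) : ℕ):ℝ)^2 * ((m - (i+2) : ℕ):ℝ) := by
        have := hu i (by omega)
        have := hu (i+1) (by omega)
        have := hu (i+2) (by omega)
        positivity
      apply le_of_mul_le_mul_left _ hpos
      calc (((m - i : ℕ):ℝ) * ((m - (i+1) : ℕ):ℝ)^2 * ((m - (i+2) : ℕ):ℝ)) *
            ((m.choose (i+1) : ℝ)^2 * (M.esymm i * M.esymm (i+2)))
          = ((m.choose (i+1):ℝ) * ((m - (i+1) : ℕ):ℝ))^2 *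
            ((((m - i : ℕ):ℝ) * M.esymm i) * (((m - (i+2) : ℕ):ℝ) * M.esymm (i+2))) := by ring
        _ ≤ (((m.choose i : ℝ) * ((m - i : ℕ):ℝ)) * ((m.choose (i+2) : ℝ) * ((m - (i+2) : ℕ):ℝ))) *
            (((m - (i+1) : ℕ):ℝ) * M.esymm (i+1))^2 := h4
        _ = (((m - i : ℕ):ℝ) * ((m - (i+1) : ℕ):ℝ)^2 * ((m - (i+2) : ℕ):ℝ)) *
            (((m.choose i : ℝ) * (m.choose (i+2) : ℝ)) * (M.esymm (i+1))^2) := by ring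

lemma newton' (M : Multiset ℝ) (i : ℕ) (h0 : 0 ≤ M.esymm i) (h2 : 0 ≤ M.esymm (i+2)) :
    M.esymm i * M.esymm (i+2) ≤ (M.esymm (i+1))^2 := by
  rcases lt_or_ge (Multiset.card M) (i+2) with h | h
  · rw [esymm_of_lt h, mul_zero]
    positivity
  · have hN := newton (Multiset.card M) M rfl i
    have hlc : ((Multiset.card M).choose i : ℝ) * ((Multiset.card M).choose (i+2) : ℝ) ≤
        (((Multiset.card M).choose (i+1) : ℕ) : ℝ)^2 := by
      exact_mod_cast choose_lc (Multiset.card M) i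
    have hCpos : (0:ℝ) < ((Multiset.card M).choose i : ℝ) * ((Multiset.card M).choose (i+2) : ℝ) := by
      have hp1 : 0 < (Multiset.card M).choose i := Nat.choose_pos (by omega)
      have hp2 : 0 < (Multiset.card M).choose (i+2) := Nat.choose_pos h
      positivity
    apply le_of_mul_le_mul_left _ hCpos
    calc ((Multiset.card M).choose i : ℝ) * ((Multiset.card M).choose (i+2) : ℝ) *
          (M.esymm i * M.esymm (i+2))
        ≤ (((Multiset.card M).choose (i+1) : ℕ) : ℝ)^2 * (M.esymm i * M.esymm (i+2)) :=
          mul_le_mul_of_nonneg_right hlc (mul_nonneg h0 h2)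
      _ ≤ ((Multiset.card M).choose i : ℝ) * ((Multiset.card M).choose (i+2) : ℝ) *
          (M.esymm (i+1))^2 := hN

lemma c1 : ∀ n : ℕ, ∀ M : Multiset ℝ, Multiset.card M = n → ∀ k : ℕ, 1 ≤ k →
    (∀ j, 1 ≤ j → j < k → 0 ≤ M.esymm j) → 0 < M.esymm k →
    ∀ j, 1 ≤ j → j < k → 0 < M.esymm j := by
  intro n
  induction n using Nat.strong_induction_on with
  | _ n IH =>
    intro M hM k hk hnn hpk J hJ1 hJk
    have hkcard : k ≤ Multiset.card M := by
      by_contra h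
      rw [esymm_of_lt (by omega)] at hpk
      exact lt_irrefl _ hpk
    by_cases hallpos : ∀ x ∈ M, 0 < x
    · exact esymm_pos M hallpos J (by omega)
    · push_neg at hallpos
      obtain ⟨c, hcM, hc0⟩ := hallpos
      set N := M.erase c with hN
      have hMN : M = c ::ₘ N := (Multiset.cons_erase hcM).symm
      have hn1 : 1 ≤ n := by
        rw [← hM]
        exact Multiset.card_pos.mpr (fun h => by simp [h] at hcM)
      have hcN : Multiset.card N = n - 1 := by
        rw [hN, Multiset.card_erase_of_mem hcM, hM]
        rfl
      have hconsj : ∀ j : ℕ, M.esymm (j+1) = c * N.esymm j + N.esymm (j+1) := fun j => by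
        rw [hMN]; exact esymm_cons c N j
      have hMnn : ∀ j, j ≤ k → 0 ≤ M.esymm j := by
        intro j hj
        rcases Nat.eq_zero_or_pos j with rfl | hj1
        · rw [esymm_zero']; exact zero_le_one
        rcases eq_or_lt_of_le hj with rfl | hjlt
        · exact hpk.le
        · exact hnn j hj1 hjlt
      have chain : ∀ j, j ≤ k → 0 ≤ N.esymm j ∧ M.esymm j ≤ N.esymm j := by
        intro j
        induction j with
        | zero =>
          intro _
          simp [esymm_zero']
        | succ j ihj =>
          intro hjk
          have hprev := ihj (by omega)
          have hMj := hMnn (j+1) hjk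
          have h1 := hconsj j
          have hcNj : c * N.esymm j ≤ 0 := mul_nonpos_of_nonpos_of_nonneg hc0 hprev.1
          constructor
          · linarith
          · linarith
      have hNk : 0 < N.esymm k := lt_of_lt_of_le hpk (chain k le_rfl).2
      have hNpos : ∀ j, 1 ≤ j → j < k → 0 < N.esymm j :=
        IH (n-1) (by omega) N hcN k hk (fun j h1 h2 => (chain j (by omega)).1) hNk
      have hNpos' : ∀ j, j < k → 0 < N.esymm j := by
        intro j hj
        rcases Nat.eq_zero_or_pos j with rfl | hj1
        · rw [esymm_zero']; exact one_pos
        · exact hNpos j hj1 hj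
      rcases eq_or_lt_of_le (hnn J hJ1 hJk) with heq | h
      swap
      · exact h
      exfalso
      set b := -c with hb
      have hb0 : 0 ≤ b := by simp [hb]; exact hc0
      have hJrel : N.esymm J = b * N.esymm (J-1) := by
        have h1 := hconsj (J-1)
        rw [show J - 1 + 1 = J by omega] at h1
        rw [← heq] at h1
        simp [hb]
        linarith
      have hNJ1pos : 0 < N.esymm (J-1) := hNpos' (J-1) (by omega)
      have hbpos : 0 < b := by
        have hNJ : 0 < N.esymm J := hNpos' J hJk
        rw [hJrel] at hNJ
        nlinarith [hNJ1pos]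
      have claim : ∀ j, J ≤ j → j ≤ k → N.esymm j ≤ b * N.esymm (j-1) := by
        intro j hj
        induction j, hj using Nat.le_induction with
        | base => intro _; rw [hJrel]
        | succ j hj ihj =>
          intro hjk
          have hstep := ihj (by omega)
          have hnewton := newton' N (j-1)
            ((chain (j-1) (by omega)).1) ((chain (j-1+2) (by omega)).1)
          rw [show j-1+1 = j by omega, show j-1+2 = j+1 by omega] at hnewton
          have hNj : 0 < N.esymm j := hNpos' j (by omega)
          have hNjm : 0 < N.esymm (j-1) := hNpos' (j-1) (by omega)
          rw [show j+1-1 = j by omega]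
          -- N_{j+1} * N_{j-1} ≤ N_j^2 ≤ (b N_{j-1}) N_j
          have h2 : N.esymm (j+1) * N.esymm (j-1) ≤ (b * N.esymm (j-1)) * N.esymm j := by
            nlinarith [hnewton, hstep, hNj]
          have := le_of_mul_le_mul_right (by linarith [h2] : N.esymm (j+1) * N.esymm (j-1) ≤ (b * N.esymm j) * N.esymm (j-1)) hNjm
          linarith [this]
      have hfin := claim k (by omega) le_rfl
      have hck := hconsj (k-1)
      rw [show k - 1 + 1 = k by omega] at hck
      have : M.esymm k ≤ 0 := by
        rw [hck]
        have : c * N.esymm (k-1) = -(b * N.esymm (k-1)) := by rw [hb]; ring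
        rw [this]
        linarith [hfin]
      linarith [hpk]

lemma del : ∀ K : ℕ, ∀ (a : ℝ) (M : Multiset ℝ),
    (∀ j, 1 ≤ j → j ≤ K+1 → 0 < (a ::ₘ M).esymm j) → 0 < M.esymm K := by
  intro K
  induction K using Nat.strong_induction_on with
  | _ K IH =>
    intro a M hG
    rcases Nat.eq_zero_or_pos K with rfl | hK
    · rw [esymm_zero']; exact one_pos
    have hpos : ∀ j, j ≤ K - 1 → 0 < M.esymm j := by
      intro j hj
      rcases Nat.eq_zero_or_pos j with rfl | hj1
      · rw [esymm_zero']; exact one_pos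
      · exact IH j (by omega) a M (fun j' h1 h2 => hG j' h1 (by omega))
    by_contra hneg
    push_neg at hneg
    set F : ℕ → ℝ := fun j => -(M.esymm j) / M.esymm (j-1) with hF
    have hIcc : (Finset.Icc 1 K).Nonempty := Finset.nonempty_Icc.mpr hK
    have hTne : ((Finset.Icc 1 K).image F).Nonempty := hIcc.image F
    set sb := ((Finset.Icc 1 K).image F).max' hTne with hsb
    obtain ⟨js, hjs_mem, hjs_eq⟩ :=
      Finset.mem_image.mp (((Finset.Icc 1 K).image F).max'_mem hTne)
    have hjs1 : 1 ≤ js := (Finset.mem_Icc.mp hjs_mem).1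
    have hjsK : js ≤ K := (Finset.mem_Icc.mp hjs_mem).2
    have hsb_ge : ∀ j, 1 ≤ j → j ≤ K → F j ≤ sb := fun j h1 h2 =>
      Finset.le_max' _ _ (Finset.mem_image_of_mem F (Finset.mem_Icc.mpr ⟨h1, h2⟩))
    have hejm : ∀ j, 1 ≤ j → j ≤ K → 0 < M.esymm (j-1) := fun j h1 h2 =>
      hpos (j-1) (by omega)
    have hfj : ∀ j, 1 ≤ j → j ≤ K → M.esymm j + (F j) * M.esymm (j-1) = 0 := by
      intro j h1 h2
      have hne := (hejm j h1 h2).ne'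
      rw [hF]
      field_simp
      ring
    have hconsj : ∀ (s : ℝ) (j : ℕ), 1 ≤ j →
        (s ::ₘ M).esymm j = s * M.esymm (j-1) + M.esymm j := by
      intro s j h1
      rw [show j = (j-1)+1 by omega, esymm_cons, show j-1+1-1 = j-1 by omega]
    have ha_gt : ∀ j, 1 ≤ j → j ≤ K → F j < a := by
      intro j h1 h2
      have hGj := hG j h1 (by omega)
      rw [hconsj a j h1] at hGj
      have hej := hejm j h1 h2
      rw [hF]
      rw [div_lt_iff₀ hej]
      nlinarith [hGj, hej]
    have hsb_lt : sb < a := by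
      rw [hsb, ← hjs_eq]
      exact ha_gt js hjs1 hjsK
    have key1 : ∀ j, 1 ≤ j → j ≤ K → 0 ≤ (sb ::ₘ M).esymm j := by
      intro j h1 h2
      rw [hconsj sb j h1]
      have h0 := hfj j h1 h2
      have := hsb_ge j h1 h2
      nlinarith [hejm j h1 h2]
    have key2 : 0 < (sb ::ₘ M).esymm (K+1) := by
      have hGK := hG (K+1) (by omega) le_rfl
      rw [hconsj a (K+1) (by omega)] at hGK
      rw [hconsj sb (K+1) (by omega)]
      simp only [Nat.add_sub_cancel] at hGK ⊢
      nlinarith [hGK, hsb_lt, hneg]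
    have hall := c1 (Multiset.card (sb ::ₘ M)) (sb ::ₘ M) rfl (K+1) (by omega)
      (fun j h1 h2 => key1 j h1 (by omega)) key2
    have hjs_pos := hall js hjs1 (by omega)
    rw [hconsj sb js hjs1, hsb, ← hjs_eq] at hjs_pos
    have := hfj js hjs1 hjsK
    linarith

lemma delG (k : ℕ) (a : ℝ) (M : Multiset ℝ)
    (hG : ∀ j, 1 ≤ j → j ≤ k → 0 < (a ::ₘ M).esymm j) :
    ∀ j, j < k → 0 < M.esymm j := by
  intro j hj
  exact del j a M (fun j' h1 h2 => hG j' h1 (by omega))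

lemma sum_le_mul_card (M : Multiset ℝ) (b : ℝ) (h : ∀ x ∈ M, x ≤ b) :
    M.sum ≤ (Multiset.card M : ℝ) * b := by
  induction M using Multiset.induction_on with
  | empty => simp
  | cons a M ih =>
    simp only [Multiset.sum_cons, Multiset.card_cons]
    push_cast
    have h1 := h a (Multiset.mem_cons_self a M)
    have h2 := ih (fun x hx => h x (Multiset.mem_cons_of_mem hx))
    nlinarith [h1, h2]

lemma mainlem (k : ℕ) (hk : 1 ≤ k) : ∀ m : ℕ, ∀ M : Multiset ℝ, Multiset.card M = m →
    ∀ a : ℝ, (∀ x ∈ M, x ≤ a) →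
    (∀ j, 1 ≤ j → j ≤ k → 0 < (a ::ₘ M).esymm j) →
    ((m + 2 - k : ℕ) : ℝ)⁻¹ * (a ::ₘ M).esymm k ≤ a * M.esymm (k-1) := by
  intro m
  induction m using Nat.strong_induction_on with
  | _ m IH =>
    intro M hm a ha hG
    have hcard : Multiset.card (a ::ₘ M) = m + 1 := by simp [hm]
    have hmk : k ≤ m + 1 := by
      by_contra h
      have h0 := hG k hk le_rfl
      rw [esymm_of_lt (by omega)] at h0
      exact lt_irrefl _ h0
    have ha0 : 0 < a := by
      have h1 := hG 1 le_rfl hk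
      rw [esymm_one', Multiset.sum_cons] at h1
      have hsum := sum_le_mul_card M a ha
      rw [hm] at hsum
      nlinarith [h1, hsum, Nat.cast_nonneg (α := ℝ) m]
    have hMlt : ∀ j, j < k → 0 < M.esymm j := delG k a M hG
    have hMk1 : 0 < M.esymm (k-1) := hMlt (k-1) (by omega)
    have hcons : (a ::ₘ M).esymm k = a * M.esymm (k-1) + M.esymm k := by
      have h5 := esymm_cons a M (k-1)
      rwa [show k-1+1 = k by omega] at h5
    have hC1 : (1:ℝ) ≤ ((m + 2 - k : ℕ) : ℝ) := by
      exact_mod_cast (by omega : 1 ≤ m + 2 - k)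
    have hCpos : (0:ℝ) < ((m + 2 - k : ℕ) : ℝ) := by linarith
    have hae : 0 < a * M.esymm (k-1) := mul_pos ha0 hMk1
    rw [inv_mul_le_iff₀ hCpos, hcons]
    rcases le_or_gt (M.esymm k) 0 with hek | hek
    · nlinarith [hek, hC1, hae]
    · have hmk2 : k ≤ m := by
        by_contra h
        rw [esymm_of_lt (show Multiset.card M < k by omega)] at hek
        exact lt_irrefl _ hek
      have hMne : M ≠ 0 := by
        intro h0
        rw [h0] at hm
        simp at hm
        omega
      obtain ⟨b, hbM, hble⟩ := exists_max M hMne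
      have hMN : M = b ::ₘ M.erase b := (Multiset.cons_erase hbM).symm
      set N := M.erase b with hNdef
      have hcN : Multiset.card N = m - 1 := by
        rw [hNdef, Multiset.card_erase_of_mem hbM, hm]
        rfl
      have hba : b ≤ a := ha b hbM
      have hGM : ∀ j, 1 ≤ j → j ≤ k → 0 < M.esymm j := by
        intro j h1 h2
        rcases eq_or_lt_of_le h2 with rfl | hlt
        · exact hek
        · exact hMlt j hlt
      have hGN : ∀ j, 1 ≤ j → j ≤ k → 0 < (b ::ₘ N).esymm j := by
        rw [← hMN]
        exact hGM
      have hNle : ∀ x ∈ N, x ≤ b := fun x hx => hble x (Multiset.mem_of_mem_erase hx)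
      have IHN := IH (m-1) (by omega) N hcN b hNle hGN
      have hb0 : 0 < b := by
        have h1 := hGM 1 le_rfl hk
        rw [esymm_one'] at h1
        have hsum := sum_le_mul_card M b hble
        rw [hm] at hsum
        have hm0 : (0:ℝ) < (m:ℝ) := by
          have : 0 < m := by omega
          exact_mod_cast this
        nlinarith [h1, hsum, hm0]
      have hNpos : ∀ j, j < k → 0 < N.esymm j := delG k b N hGN
      have hstep : N.esymm (k-1) ≤ M.esymm (k-1) := by
        rcases Nat.eq_zero_or_pos (k-1) with h0 | hpos1
        · rw [h0, esymm_zero', esymm_zero']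
        · have hcNk : M.esymm (k-1) = b * N.esymm (k-2) + N.esymm (k-1) := by
            have h6 := esymm_cons b N (k-2)
            rw [show k-2+1 = k-1 by omega] at h6
            rw [hMN]
            exact h6
          have h7 : 0 ≤ b * N.esymm (k-2) := mul_nonneg hb0.le (hNpos (k-2) (by omega)).le
          linarith
      have hand : M.esymm k ≤ ((m+1-k : ℕ):ℝ) * (a * M.esymm (k-1)) := by
        rw [← hMN] at IHN
        have hc'pos : (0:ℝ) < ((m-1+2-k:ℕ):ℝ) := by
          have : 1 ≤ m-1+2-k := by omega
          exact_mod_cast Nat.lt_of_lt_of_le Nat.zero_lt_one this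
        rw [inv_mul_le_iff₀ hc'pos] at IHN
        have h3 : b * N.esymm (k-1) ≤ a * M.esymm (k-1) := by
          have hNk1 : 0 ≤ N.esymm (k-1) := (hNpos (k-1) (by omega)).le
          have h8 : b * N.esymm (k-1) ≤ a * N.esymm (k-1) := mul_le_mul_of_nonneg_right hba hNk1
          have h9 : a * N.esymm (k-1) ≤ a * M.esymm (k-1) := mul_le_mul_of_nonneg_left hstep ha0.le
          linarith
        have h10 : M.esymm k ≤ ((m-1+2-k:ℕ):ℝ) * (a * M.esymm (k-1)) :=
          le_trans IHN (mul_le_mul_of_nonneg_left h3 hc'pos.le)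
        rwa [show m-1+2-k = m+1-k by omega] at h10
      have hcc : ((m+2-k:ℕ):ℝ) = ((m+1-k:ℕ):ℝ) + 1 := by
        exact_mod_cast (by omega : m+2-k = (m+1-k)+1)
      rw [hcc]
      nlinarith [hand, hae]

end GardingAux

theorem lambda1_sigma_km1_ge {n k : ℕ} (hk1 : 1 ≤ k) (hkn : k ≤ n) :
    ∃ C : ℝ, C > 0 ∧
      ∀ lam : Fin n → ℝ, GammaCone k lam → Antitone lam →
        lam ⟨0, by omega⟩ *
            esymmOn ({(⟨0, by omega⟩ : Fin n)}ᶜ : Finset (Fin n)) ((k : ℤ) - 1) lam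
          ≥ C * esymm (k : ℤ) lam := by
  classical
  have hn : 1 ≤ n := le_trans hk1 hkn
  have hCnat : 1 ≤ n - 1 + 2 - k := by omega
  have hCpos : (0:ℝ) < ((n - 1 + 2 - k : ℕ) : ℝ) := by
    exact_mod_cast Nat.lt_of_lt_of_le Nat.zero_lt_one hCnat
  refine ⟨((n - 1 + 2 - k : ℕ) : ℝ)⁻¹, by positivity, ?_⟩
  intro lam hGamma hanti
  have hi0 : (0:ℕ) < n := by omega
  set i0 : Fin n := ⟨0, hi0⟩ with hi0def
  show lam i0 * esymmOn ({i0}ᶜ : Finset (Fin n)) ((k : ℤ) - 1) lam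
    ≥ ((n - 1 + 2 - k : ℕ) : ℝ)⁻¹ * esymm (k : ℤ) lam
  have hval : (Finset.univ : Finset (Fin n)).val = i0 ::ₘ ({i0}ᶜ : Finset (Fin n)).val := by
    have hcomp : ({i0}ᶜ : Finset (Fin n)) = Finset.univ.erase i0 := by
      ext x
      simp [Finset.mem_compl, Finset.mem_erase]
    rw [hcomp, Finset.erase_val]
    exact (Multiset.cons_erase (by simp : i0 ∈ (Finset.univ : Finset (Fin n)).val)).symm
  set M := (({i0}ᶜ : Finset (Fin n)).val.map lam) with hMdef
  set a := lam i0 with hadef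
  have hcardM : Multiset.card M = n - 1 := by
    rw [hMdef, Multiset.card_map]
    have h1 : ({i0}ᶜ : Finset (Fin n)).card = n - 1 := by
      rw [Finset.card_compl]
      simp
    exact h1
  have bridge : ∀ (S : Finset (Fin n)) (j : ℕ), esymmOn S (j:ℤ) lam = (S.val.map lam).esymm j := by
    intro S j
    rw [esymmOn, if_neg (by omega), Int.toNat_natCast]
    exact (Finset.esymm_map_val lam S j).symm
  have hfull : ∀ j : ℕ, esymm (j:ℤ) lam = (a ::ₘ M).esymm j := by
    intro j
    rw [esymm, bridge, hval, Multiset.map_cons, ← hMdef, ← hadef]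
  have hG : ∀ j, 1 ≤ j → j ≤ k → 0 < (a ::ₘ M).esymm j := by
    intro j h1 h2
    rw [← hfull j]
    exact hGamma j h1 h2
  have ha : ∀ x ∈ M, x ≤ a := by
    intro x hx
    obtain ⟨i, hi, rfl⟩ := Multiset.mem_map.mp hx
    apply hanti
    simp [hi0def, Fin.le_def]
  have hmain := GardingAux.mainlem k hk1 (n-1) M hcardM a ha hG
  have hkk : ((k:ℤ) - 1) = ((k-1 : ℕ) : ℤ) := by omega
  rw [ge_iff_le, hkk, bridge ({i0}ᶜ : Finset (Fin n)) (k-1), ← hMdef, hfull k]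
  rwa [show n - 1 + 2 - k = (n-1) + 2 - k by omega] at hmain
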